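/- Let X and Y be compact metric spaces, A ⊆ X and B ⊆ Y closed subsets such that A contains all isolated points of X and B contains all isolated points of Y, and let I_d(X,A) ⊆ X × [0,1] and I_e(Y,B) ⊆ Y × [0,1] be built from admissible sequences d and e respectively. Then every homeomorphism g : X → Y with g(A) = B extends to a homeomorphism f : I_d(X,A) → I_e(Y,B), i.e., there is a homeomorphism f with f(x, 0) = (g(x), 0) for all x ∈ X. -/

import Mathlib

open Set Topology Filter

/-- The space `I_d(X,A) ⊆ X × [0,1]`: the copy `X × {0}` of `X` together with the isolated
points `ã_n = (d_n, 1/n)` (here indexed by `n : ℕ`, with `ã_n = (d n, 1/(n+1))`). -/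
def Itilde {X : Type*} [TopologicalSpace X] (d : ℕ → X) : Set (X × ℝ) :=
  (Set.univ ×ˢ {(0 : ℝ)}) ∪ Set.range (fun n : ℕ => (d n, 1 / (n + 1 : ℝ)))

/-- A sequence `d` is admissible for `A` if it takes values in `A`, has dense range in `A`,
and attains each of its values at infinitely many indices. -/
def Admissible {X : Type*} [TopologicalSpace X] (A : Set X) (d : ℕ → X) : Prop :=
  (∀ n, d n ∈ A) ∧ A ⊆ closure (Set.range d) ∧ ∀ n, {m : ℕ | d m = d n}.Infinite

section Pairing

variable (r : ℕ → ℕ → Prop)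
  (hrow : ∀ n : ℕ, ∀ S : Finset ℕ, ∃ m : ℕ, m ∉ S ∧ r n m)
  (hcol : ∀ m : ℕ, ∀ S : Finset ℕ, ∃ n : ℕ, n ∉ S ∧ r n m)

/-- One step of the back-and-forth construction. -/
noncomputable def pairStep (k : ℕ) (P : List (ℕ × ℕ)) : ℕ × ℕ :=
  if Even k then
    let n := sInf {t : ℕ | t ∉ P.map Prod.fst}
    (n, (hrow n (P.map Prod.snd).toFinset).choose)
  else
    let m := sInf {t : ℕ | t ∉ P.map Prod.snd}
    ((hcol m (P.map Prod.fst).toFinset).choose, m)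

noncomputable def pairList : ℕ → List (ℕ × ℕ)
  | 0 => []
  | k+1 => pairList k ++ [pairStep r hrow hcol k (pairList k)]

noncomputable def pairSeq (k : ℕ) : ℕ × ℕ := pairStep r hrow hcol k (pairList r hrow hcol k)

lemma pairList_eq (k : ℕ) : pairList r hrow hcol k = (List.range k).map (pairSeq r hrow hcol) := by
  induction k with
  | zero => rfl
  | succ k ih =>
    show pairList r hrow hcol k ++ [pairSeq r hrow hcol k] = _
    rw [List.range_succ, List.map_append, ih, List.map_singleton]

lemma mem_pairList {p : ℕ × ℕ} {k : ℕ} :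
    p ∈ pairList r hrow hcol k ↔ ∃ i < k, pairSeq r hrow hcol i = p := by
  simp [pairList_eq, List.mem_map, List.mem_range]

lemma sInf_notmem (l : List ℕ) : sInf {t : ℕ | t ∉ l} ∉ l := by
  have hfin : {t : ℕ | t ∈ l}.Finite := l.finite_toSet
  have hne : {t : ℕ | t ∉ l}.Nonempty := hfin.infinite_compl.nonempty
  exact Nat.sInf_mem hne

lemma pairSeq_fst_notmem (k : ℕ) :
    (pairSeq r hrow hcol k).1 ∉ (pairList r hrow hcol k).map Prod.fst := by
  unfold pairSeq pairStep
  by_cases h : Even k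
  · simp only [if_pos h]
    exact sInf_notmem _
  · simp only [if_neg h]
    intro hmem
    exact ((hcol _ _).choose_spec.1) (List.mem_toFinset.2 hmem)

lemma pairSeq_snd_notmem (k : ℕ) :
    (pairSeq r hrow hcol k).2 ∉ (pairList r hrow hcol k).map Prod.snd := by
  unfold pairSeq pairStep
  by_cases h : Even k
  · simp only [if_pos h]
    intro hmem
    exact ((hrow _ _).choose_spec.1) (List.mem_toFinset.2 hmem)
  · simp only [if_neg h]
    exact sInf_notmem _

lemma pairSeq_rel (k : ℕ) : r (pairSeq r hrow hcol k).1 (pairSeq r hrow hcol k).2 := by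
  unfold pairSeq pairStep
  by_cases h : Even k
  · simp only [if_pos h]
    exact (hrow _ _).choose_spec.2
  · simp only [if_neg h]
    exact (hcol _ _).choose_spec.2

lemma pairSeq_fst_injective : Function.Injective (fun k => (pairSeq r hrow hcol k).1) := by
  intro i j hij
  by_contra hne
  wlog hlt : i < j generalizing i j
  · exact this hij.symm (Ne.symm hne) (by omega)
  have hmem : (pairSeq r hrow hcol i).1 ∈ (pairList r hrow hcol j).map Prod.fst :=
    List.mem_map.2 ⟨_, (mem_pairList r hrow hcol).2 ⟨i, hlt, rfl⟩, rfl⟩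
  rw [show (pairSeq r hrow hcol i).1 = (pairSeq r hrow hcol j).1 from hij] at hmem
  exact pairSeq_fst_notmem r hrow hcol j hmem

lemma pairSeq_snd_injective : Function.Injective (fun k => (pairSeq r hrow hcol k).2) := by
  intro i j hij
  by_contra hne
  wlog hlt : i < j generalizing i j
  · exact this hij.symm (Ne.symm hne) (by omega)
  have hmem : (pairSeq r hrow hcol i).2 ∈ (pairList r hrow hcol j).map Prod.snd :=
    List.mem_map.2 ⟨_, (mem_pairList r hrow hcol).2 ⟨i, hlt, rfl⟩, rfl⟩
  rw [show (pairSeq r hrow hcol i).2 = (pairSeq r hrow hcol j).2 from hij] at hmem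
  exact pairSeq_snd_notmem r hrow hcol j hmem

lemma pairSeq_fst_surjective : Function.Surjective (fun k => (pairSeq r hrow hcol k).1) := by
  intro n
  induction n using Nat.strong_induction_on with
  | _ n ih =>
  by_contra h
  push_neg at h
  have hw : ∀ n' < n, ∃ i, (pairSeq r hrow hcol i).1 = n' := ih
  classical
  set w : ℕ → ℕ := fun n' => if h' : n' < n then (hw n' h').choose else 0 with hwdef
  set K : ℕ := (Finset.range n).sup w + 1 with hK
  have hwK : ∀ n' < n, ∃ i < K, (pairSeq r hrow hcol i).1 = n' := by
    intro n' hn'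
    refine ⟨w n', ?_, ?_⟩
    · have := Finset.le_sup (f := w) (Finset.mem_range.2 hn')
      omega
    · simp only [hwdef, dif_pos hn']
      exact (hw n' hn').choose_spec
  set j := 2 * K with hj
  have hKj : K ≤ j := by omega
  have hset : sInf {t : ℕ | t ∉ (pairList r hrow hcol j).map Prod.fst} = n := by
    have hnmem : n ∈ {t : ℕ | t ∉ (pairList r hrow hcol j).map Prod.fst} := by
      intro hmem
      obtain ⟨p, hp, hp2⟩ := List.mem_map.1 hmem
      obtain ⟨i, _, hi2⟩ := (mem_pairList r hrow hcol).1 hp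
      exact h i (by rw [hi2]; exact hp2)
    refine le_antisymm (Nat.sInf_le hnmem) (le_csInf ⟨n, hnmem⟩ ?_)
    intro t ht
    by_contra hlt
    push_neg at hlt
    obtain ⟨i, hiK, hi⟩ := hwK t hlt
    exact ht (List.mem_map.2 ⟨_, (mem_pairList r hrow hcol).2 ⟨i, lt_of_lt_of_le hiK hKj, rfl⟩, hi⟩)
  have heven : Even j := ⟨K, by omega⟩
  have : (pairSeq r hrow hcol j).1 = n := by
    unfold pairSeq pairStep
    simp only [if_pos heven]
    exact hset
  exact h j this

lemma pairSeq_snd_surjective : Function.Surjective (fun k => (pairSeq r hrow hcol k).2) := by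
  intro n
  induction n using Nat.strong_induction_on with
  | _ n ih =>
  by_contra h
  push_neg at h
  have hw : ∀ n' < n, ∃ i, (pairSeq r hrow hcol i).2 = n' := ih
  classical
  set w : ℕ → ℕ := fun n' => if h' : n' < n then (hw n' h').choose else 0 with hwdef
  set K : ℕ := (Finset.range n).sup w + 1 with hK
  have hwK : ∀ n' < n, ∃ i < K, (pairSeq r hrow hcol i).2 = n' := by
    intro n' hn'
    refine ⟨w n', ?_, ?_⟩
    · have := Finset.le_sup (f := w) (Finset.mem_range.2 hn')
      omega
    · simp only [hwdef, dif_pos hn']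
      exact (hw n' hn').choose_spec
  set j := 2 * K + 1 with hj
  have hKj : K ≤ j := by omega
  have hset : sInf {t : ℕ | t ∉ (pairList r hrow hcol j).map Prod.snd} = n := by
    have hnmem : n ∈ {t : ℕ | t ∉ (pairList r hrow hcol j).map Prod.snd} := by
      intro hmem
      obtain ⟨p, hp, hp2⟩ := List.mem_map.1 hmem
      obtain ⟨i, _, hi2⟩ := (mem_pairList r hrow hcol).1 hp
      exact h i (by rw [hi2]; exact hp2)
    refine le_antisymm (Nat.sInf_le hnmem) (le_csInf ⟨n, hnmem⟩ ?_)
    intro t ht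
    by_contra hlt
    push_neg at hlt
    obtain ⟨i, hiK, hi⟩ := hwK t hlt
    exact ht (List.mem_map.2 ⟨_, (mem_pairList r hrow hcol).2 ⟨i, lt_of_lt_of_le hiK hKj, rfl⟩, hi⟩)
  have hodd : ¬ Even j := by
    simp [hj, Nat.even_add_one, parity_simps]
  have : (pairSeq r hrow hcol j).2 = n := by
    unfold pairSeq pairStep
    simp only [if_neg hodd]
    exact hset
  exact h j this

end Pairing

theorem exists_perm_rel (r : ℕ → ℕ → Prop)
    (hrow : ∀ n : ℕ, ∀ S : Finset ℕ, ∃ m : ℕ, m ∉ S ∧ r n m)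
    (hcol : ∀ m : ℕ, ∀ S : Finset ℕ, ∃ n : ℕ, n ∉ S ∧ r n m) : ∃ σ : ℕ ≃ ℕ, ∀ n, r n (σ n) := by
  let ea : ℕ ≃ ℕ := Equiv.ofBijective _ ⟨pairSeq_fst_injective r hrow hcol,
    pairSeq_fst_surjective r hrow hcol⟩
  let eb : ℕ ≃ ℕ := Equiv.ofBijective _ ⟨pairSeq_snd_injective r hrow hcol,
    pairSeq_snd_surjective r hrow hcol⟩
  refine ⟨ea.symm.trans eb, fun n => ?_⟩
  have h1 : (pairSeq r hrow hcol (ea.symm n)).1 = n := ea.apply_symm_apply n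
  have h2 : (ea.symm.trans eb) n = (pairSeq r hrow hcol (ea.symm n)).2 := rfl
  rw [h2]
  have h3 := pairSeq_rel r hrow hcol (ea.symm n)
  rwa [h1] at h3

noncomputable def cseq (n : ℕ) : ℝ := 1 / ((n : ℝ) + 1)

lemma cseq_pos (n : ℕ) : 0 < cseq n := by unfold cseq; positivity

lemma cseq_le_one (n : ℕ) : cseq n ≤ 1 := by
  unfold cseq
  rw [div_le_one (by positivity)]
  have : (0:ℝ) ≤ n := Nat.cast_nonneg n
  linarith

lemma cseq_strictAnti : StrictAnti cseq := by
  intro m n h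
  unfold cseq
  apply one_div_lt_one_div_of_lt (by positivity)
  have : (m:ℝ) < n := by exact_mod_cast h
  linarith

lemma cseq_inj {m n : ℕ} (h : cseq m = cseq n) : m = n :=
  cseq_strictAnti.injective h

noncomputable def csep (n : ℕ) : ℝ := 1 / (((n : ℝ) + 1) * ((n : ℝ) + 2))

lemma csep_pos (n : ℕ) : 0 < csep n := by unfold csep; positivity

lemma csep_le_abs {n m : ℕ} (h : m ≠ n) : csep n ≤ |cseq m - cseq n| := by
  unfold csep cseq
  set a := (m:ℝ) with ha
  set b := (n:ℝ) with hb
  have ha0 : (0:ℝ) ≤ a := Nat.cast_nonneg m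
  have hb0 : (0:ℝ) ≤ b := Nat.cast_nonneg n
  rcases lt_or_gt_of_ne h with hlt | hgt
  · have hab : a + 1 ≤ b := by rw [ha, hb]; exact_mod_cast Nat.add_one_le_iff.mpr hlt
    have hpos : 0 < 1/(a+1) - 1/(b+1) := by
      have : 1/(b+1) < 1/(a+1) := one_div_lt_one_div_of_lt (by linarith) (by linarith)
      linarith
    rw [abs_of_pos hpos]
    rw [div_sub_div _ _ (by positivity) (by positivity), div_le_div_iff₀ (by positivity) (by positivity)]
    nlinarith [mul_nonneg (sub_nonneg.2 hab) hb0, mul_nonneg ha0 hb0]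
  · have hab : b + 1 ≤ a := by rw [ha, hb]; exact_mod_cast Nat.add_one_le_iff.mpr hgt
    have hpos : 0 < 1/(b+1) - 1/(a+1) := by
      have : 1/(a+1) < 1/(b+1) := one_div_lt_one_div_of_lt (by linarith) (by linarith)
      linarith
    rw [abs_sub_comm, abs_of_pos hpos]
    rw [div_sub_div _ _ (by positivity) (by positivity), div_le_div_iff₀ (by positivity) (by positivity)]
    nlinarith [mul_nonneg (sub_nonneg.2 hab) hb0, mul_nonneg ha0 hb0]

lemma csep_le_abs_zero (n : ℕ) : csep n ≤ |0 - cseq n| := by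
  have h1 : |0 - cseq n| = cseq n := by
    rw [zero_sub, abs_neg, abs_of_pos (cseq_pos n)]
  rw [h1]
  unfold csep cseq
  have hb0 : (0:ℝ) ≤ (n:ℝ) := Nat.cast_nonneg n
  rw [div_le_div_iff₀ (by positivity) (by positivity)]
  nlinarith

section ItildeLemmas

variable {X : Type*} [MetricSpace X] (d : ℕ → X)

lemma mem_Itilde_cases {p : X × ℝ} (hp : p ∈ Itilde d) :
    p.2 = 0 ∨ ∃ n : ℕ, p = (d n, cseq n) := by
  rcases hp with ⟨-, h0⟩ | ⟨n, hn⟩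
  · exact Or.inl h0
  · exact Or.inr ⟨n, hn.symm⟩

lemma atilde_mem (n : ℕ) : (d n, cseq n) ∈ Itilde d := Or.inr ⟨n, rfl⟩

lemma eq_atilde_of_mem {p : X × ℝ} (n : ℕ) (hp : p ∈ Itilde d)
    (h : |p.2 - cseq n| < csep n) : p = (d n, cseq n) := by
  rcases mem_Itilde_cases d hp with h0 | ⟨m, hm⟩
  · rw [h0] at h
    exact absurd h (not_lt.2 (csep_le_abs_zero n))
  · by_cases hmn : m = n
    · rw [hm, hmn]
    · rw [hm] at h
      exact absurd h (not_lt.2 (csep_le_abs hmn))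

lemma isClosed_Itilde [CompactSpace X] : IsClosed (Itilde d) := by
  apply IsSeqClosed.isClosed
  intro u p hu hup
  by_cases hp2 : p.2 = 0
  · exact Or.inl ⟨mem_univ _, hp2⟩
  · have hconv2 : Tendsto (fun k => (u k).2) atTop (𝓝 p.2) :=
      (continuous_snd.tendsto p).comp hup
    have h2nn : ∀ k, 0 ≤ (u k).2 := by
      intro k
      rcases mem_Itilde_cases d (hu k) with h0 | ⟨n, hn⟩
      · rw [h0]
      · rw [hn]; exact (cseq_pos n).le
    have hpos : 0 < p.2 := lt_of_le_of_ne (ge_of_tendsto' hconv2 h2nn) (Ne.symm hp2)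
    set N := ⌈2 / p.2⌉₊ with hN
    have hev : ∀ᶠ k in atTop, p.2 / 2 < (u k).2 :=
      hconv2.eventually (eventually_gt_nhds (by linarith))
    have hevF : ∀ᶠ k in atTop, u k ∈ (fun n : ℕ => ((d n, cseq n) : X × ℝ)) '' (Iic N) := by
      refine hev.mono fun k hk => ?_
      rcases mem_Itilde_cases d (hu k) with h0 | ⟨n, hn⟩
      · rw [h0] at hk; linarith
      · refine ⟨n, ?_, hn.symm⟩
        rw [hn] at hk
        have h1 : p.2 * ((n:ℝ) + 1) < 1 * 2 := by
          have := (div_lt_div_iff₀ (by norm_num) (by positivity)).mp hk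
          linarith [this]
        have h2 : (n:ℝ) + 1 ≤ 2 / p.2 := by
          rw [le_div_iff₀ hpos]; nlinarith
        have h3 : (n:ℝ) < N := by
          have := Nat.le_ceil (2 / p.2)
          calc (n:ℝ) < (n:ℝ) + 1 := by linarith
            _ ≤ 2 / p.2 := h2
            _ ≤ N := this
        exact_mod_cast h3.le
    have hclosed : IsClosed ((fun n : ℕ => ((d n, cseq n) : X × ℝ)) '' (Iic N)) :=
      ((Set.finite_Iic N).image _).isClosed
    obtain ⟨n, -, hn⟩ := hclosed.mem_of_tendsto hup hevF
    exact Or.inr ⟨n, hn⟩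

lemma isCompact_Itilde [CompactSpace X] : IsCompact (Itilde d) := by
  refine IsCompact.of_isClosed_subset (isCompact_univ.prod (isCompact_Icc (a := (0:ℝ)) (b := 1)))
    (isClosed_Itilde d) ?_
  rintro p hp
  rcases mem_Itilde_cases d hp with h0 | ⟨n, hn⟩
  · exact ⟨mem_univ _, by rw [h0]; exact ⟨le_refl _, by norm_num⟩⟩
  · exact ⟨mem_univ _, by rw [hn]; exact ⟨(cseq_pos n).le, cseq_le_one n⟩⟩

lemma isOpen_atilde_singleton (n : ℕ) :
    IsOpen ({⟨(d n, cseq n), atilde_mem d n⟩} : Set (Itilde d)) := by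
  have : ({⟨(d n, cseq n), atilde_mem d n⟩} : Set (Itilde d)) =
      Subtype.val ⁻¹' (Metric.ball ((d n, cseq n) : X × ℝ) (csep n)) := by
    ext q
    simp only [mem_singleton_iff, mem_preimage, Metric.mem_ball]
    constructor
    · intro h; rw [h]; simpa using csep_pos n
    · intro h
      have h2 : |(q : X × ℝ).2 - cseq n| < csep n := by
        have h3 : dist (q : X × ℝ).2 (cseq n) ≤ dist (q : X × ℝ) (d n, cseq n) := by
          rw [Prod.dist_eq]; exact le_max_right _ _
        calc |(q : X × ℝ).2 - cseq n| = dist (q : X × ℝ).2 (cseq n) := (Real.dist_eq _ _).symm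
          _ ≤ dist (q : X × ℝ) (d n, cseq n) := h3
          _ < csep n := h
      exact Subtype.ext (eq_atilde_of_mem d n q.2 h2)
  rw [this]
  exact Metric.isOpen_ball.preimage continuous_subtype_val

end ItildeLemmas

lemma itilde_bijective {Z : Type*} [MetricSpace Z] (f : ℕ → Z) :
    Function.Bijective (Sum.elim (fun z => ⟨(z, 0), Or.inl ⟨mem_univ z, rfl⟩⟩)
      (fun n => ⟨(f n, cseq n), atilde_mem f n⟩) : Z ⊕ ℕ → (Itilde f : Set (Z × ℝ))) := by
  constructor
  · rintro (z | n) (z' | n') h <;>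
      simp only [Sum.elim_inl, Sum.elim_inr, Subtype.mk.injEq, Subtype.ext_iff, Prod.mk.injEq] at h
    · rw [h.1]
    · exact absurd h.2.symm (ne_of_gt (cseq_pos n'))
    · exact absurd h.2 (ne_of_gt (cseq_pos n))
    · rw [cseq_inj h.2]
  · rintro ⟨p, hp⟩
    rcases mem_Itilde_cases f hp with h0 | ⟨n, hn⟩
    · refine ⟨Sum.inl p.1, Subtype.ext ?_⟩
      show (p.1, (0:ℝ)) = p
      rw [← h0]
    · exact ⟨Sum.inr n, Subtype.ext hn.symm⟩

/-- any homeomorphism `g : X → Y` with `g '' A = B` extends to a homeomorphism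
`I_d(X,A) → I_e(Y,B)`. -/
theorem homeomorph_extends_to_Itilde
    {X Y : Type*} [MetricSpace X] [CompactSpace X] [MetricSpace Y] [CompactSpace Y]
    {A : Set X} {B : Set Y} (hA : IsClosed A) (hB : IsClosed B)
    (hAiso : ∀ x : X, IsOpen ({x} : Set X) → x ∈ A)
    (hBiso : ∀ y : Y, IsOpen ({y} : Set Y) → y ∈ B)
    {d : ℕ → X} {e : ℕ → Y} (hd : Admissible A d) (he : Admissible B e)
    (g : X ≃ₜ Y) (hg : g '' A = B) :
    ∃ f : (Itilde d : Type _) ≃ₜ (Itilde e : Type _),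
      ∀ x : X, (f ⟨(x, 0), Or.inl (Set.mk_mem_prod (Set.mem_univ x) rfl)⟩ : Y × ℝ)
        = (g x, 0) := by
  classical
  obtain ⟨hd1, hd2, hd3⟩ := hd
  obtain ⟨he1, he2, he3⟩ := he
  set r : ℕ → ℕ → Prop := fun n m => dist (g (d n)) (e m) < cseq (min n m) with hrdef
  have hrow : ∀ n : ℕ, ∀ S : Finset ℕ, ∃ m : ℕ, m ∉ S ∧ r n m := by
    intro n S
    have hgB : g (d n) ∈ B := by rw [← hg]; exact ⟨d n, hd1 n, rfl⟩
    have hcl : g (d n) ∈ closure (range e) := he2 hgB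
    obtain ⟨y, ⟨m₀, rfl⟩, hy⟩ := Metric.mem_closure_iff.1 hcl (cseq n) (cseq_pos n)
    obtain ⟨m, hm, hmS⟩ := (he3 m₀).exists_notMem_finset S
    refine ⟨m, hmS, ?_⟩
    show dist (g (d n)) (e m) < cseq (min n m)
    calc dist (g (d n)) (e m) = dist (g (d n)) (e m₀) := by rw [hm]
      _ < cseq n := hy
      _ ≤ cseq (min n m) := cseq_strictAnti.antitone (min_le_left n m)
  have hcol : ∀ m : ℕ, ∀ S : Finset ℕ, ∃ n : ℕ, n ∉ S ∧ r n m := by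
    intro m S
    have hBm : e m ∈ B := he1 m
    have hxA : g.symm (e m) ∈ A := by
      rw [← hg] at hBm
      obtain ⟨a, ha, hae⟩ := hBm
      rw [← hae, Homeomorph.symm_apply_apply]
      exact ha
    have hcl : g.symm (e m) ∈ closure (range d) := hd2 hxA
    obtain ⟨δ, hδ, hδ2⟩ := Metric.continuousAt_iff.1
      (g.continuous.continuousAt (x := g.symm (e m))) (cseq m) (cseq_pos m)
    obtain ⟨x₀, ⟨n₀, rfl⟩, hx₀⟩ := Metric.mem_closure_iff.1 hcl δ hδ
    obtain ⟨n, hn, hnS⟩ := (hd3 n₀).exists_notMem_finset S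
    refine ⟨n, hnS, ?_⟩
    have h1 : dist (g (d n₀)) (g (g.symm (e m))) < cseq m := hδ2 (by rw [dist_comm]; exact hx₀)
    rw [Homeomorph.apply_symm_apply] at h1
    show dist (g (d n)) (e m) < cseq (min n m)
    calc dist (g (d n)) (e m) = dist (g (d n₀)) (e m) := by rw [hn]
      _ < cseq m := h1
      _ ≤ cseq (min n m) := cseq_strictAnti.antitone (min_le_right n m)
  obtain ⟨σ, hσ⟩ := exists_perm_rel r hrow hcol
  have hσtop : Tendsto (fun n => σ n) atTop atTop := σ.injective.nat_tendsto_atTop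
  have hmin : Tendsto (fun n => min n (σ n)) atTop atTop := by
    rw [tendsto_atTop]
    intro b
    filter_upwards [eventually_ge_atTop b, hσtop.eventually_ge_atTop b] with n h1 h2
    exact le_min h1 h2
  have hcseqσ : Tendsto (fun n => cseq (σ n)) atTop (𝓝 0) :=
    tendsto_one_div_add_atTop_nhds_zero_nat.comp hσtop
  have hdist0 : Tendsto (fun n => dist (g (d n)) (e (σ n))) atTop (𝓝 0) := by
    apply squeeze_zero (fun n => dist_nonneg) (fun n => (hσ n).le)
    exact tendsto_one_div_add_atTop_nhds_zero_nat.comp hmin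
  -- the bijections with the sum type
  let jD : X ⊕ ℕ → (Itilde d : Set (X × ℝ)) := Sum.elim
    (fun x => ⟨(x, 0), Or.inl ⟨mem_univ x, rfl⟩⟩)
    (fun n => ⟨(d n, cseq n), atilde_mem d n⟩)
  let jE : Y ⊕ ℕ → (Itilde e : Set (Y × ℝ)) := Sum.elim
    (fun y => ⟨(y, 0), Or.inl ⟨mem_univ y, rfl⟩⟩)
    (fun n => ⟨(e n, cseq n), atilde_mem e n⟩)
  let eD := Equiv.ofBijective jD (itilde_bijective d)
  let eE := Equiv.ofBijective jE (itilde_bijective e)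
  let f₀ : (Itilde d : Set (X × ℝ)) ≃ (Itilde e : Set (Y × ℝ)) :=
    eD.symm.trans ((Equiv.sumCongr g.toEquiv σ).trans eE)
  have hfx : ∀ (x : X) (h : ((x, (0:ℝ)) : X × ℝ) ∈ Itilde d),
      f₀ ⟨(x, 0), h⟩ = ⟨(g x, 0), Or.inl ⟨mem_univ _, rfl⟩⟩ := by
    intro x h
    have h1 : eD.symm ⟨(x, 0), h⟩ = Sum.inl x := by
      rw [Equiv.symm_apply_eq]
      exact Subtype.ext rfl
    show eE ((Equiv.sumCongr g.toEquiv σ) (eD.symm ⟨(x, 0), h⟩)) = _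
    rw [h1]
    rfl
  have hfn : ∀ (n : ℕ) (h : ((d n, cseq n) : X × ℝ) ∈ Itilde d),
      f₀ ⟨(d n, cseq n), h⟩ = ⟨(e (σ n), cseq (σ n)), atilde_mem e (σ n)⟩ := by
    intro n h
    have h1 : eD.symm ⟨(d n, cseq n), h⟩ = Sum.inr n := by
      rw [Equiv.symm_apply_eq]
      exact Subtype.ext rfl
    show eE ((Equiv.sumCongr g.toEquiv σ) (eD.symm ⟨(d n, cseq n), h⟩)) = _
    rw [h1]
    rfl
  have hcont : Continuous (⇑f₀) := by
    rw [continuous_iff_continuousAt]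
    rintro ⟨⟨x, t⟩, hq⟩
    rcases mem_Itilde_cases d hq with ht | ⟨n, hn⟩
    · -- t = 0 : cluster point case
      have ht0 : t = 0 := ht
      subst ht0
      rw [Metric.continuousAt_iff]
      intro ε hε
      have hev : ∀ᶠ n in atTop, dist (g (d n)) (e (σ n)) < ε / 2 ∧ cseq (σ n) < ε / 2 := by
        filter_upwards [hdist0.eventually_lt_const (by linarith : (0:ℝ) < ε / 2),
          hcseqσ.eventually_lt_const (by linarith : (0:ℝ) < ε / 2)] with n h1 h2
        exact ⟨h1, h2⟩
      obtain ⟨N, hN⟩ := eventually_atTop.1 hev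
      obtain ⟨δ₁, hδ₁, hδ₁2⟩ := Metric.continuousAt_iff.1
        (g.continuous.continuousAt (x := x)) (ε / 2) (by linarith)
      refine ⟨min δ₁ (cseq N), lt_min hδ₁ (cseq_pos N), ?_⟩
      rintro ⟨⟨x', t'⟩, hq'⟩ hlt
      rw [Subtype.dist_eq] at hlt
      have hfst : dist x' x < δ₁ := by
        have h1 : dist x' x ≤ dist ((x', t') : X × ℝ) ((x, 0) : X × ℝ) := by
          rw [Prod.dist_eq]; exact le_max_left _ _
        exact lt_of_le_of_lt h1 (lt_of_lt_of_le hlt (min_le_left _ _))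
      have hsnd : dist t' (0:ℝ) < cseq N := by
        have h1 : dist t' (0:ℝ) ≤ dist ((x', t') : X × ℝ) ((x, 0) : X × ℝ) := by
          rw [Prod.dist_eq]; exact le_max_right _ _
        exact lt_of_le_of_lt h1 (lt_of_lt_of_le hlt (min_le_right _ _))
      rcases mem_Itilde_cases d hq' with ht' | ⟨m, hm⟩
      · -- point of the base copy of X
        have ht'0 : t' = 0 := ht'
        subst ht'0
        rw [Subtype.dist_eq, hfx x' hq', hfx x hq]
        show dist ((g x', (0:ℝ)) : Y × ℝ) ((g x, 0) : Y × ℝ) < ε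
        rw [Prod.dist_eq]
        apply max_lt
        · exact lt_of_lt_of_le (hδ₁2 hfst) (by linarith)
        · simpa using hε
      · -- an isolated point ã_m
        have hx'm : x' = d m := congrArg Prod.fst hm
        have ht'm : t' = cseq m := congrArg Prod.snd hm
        have hmN : N ≤ m := by
          have h4 : dist t' (0:ℝ) = t' := by
            rw [Real.dist_eq, sub_zero, abs_of_nonneg]
            rw [ht'm]
            exact (cseq_pos m).le
          have hlt2 : cseq m < cseq N := by
            rw [← ht'm, ← h4]
            exact hsnd
          exact (cseq_strictAnti.lt_iff_gt.mp hlt2).le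
        obtain ⟨hdist1, hdist2⟩ := hN m hmN
        have hqeq : (⟨(x', t'), hq'⟩ : (Itilde d : Set (X × ℝ))) =
            ⟨(d m, cseq m), atilde_mem d m⟩ := Subtype.ext hm
        rw [Subtype.dist_eq, hqeq, hfn m (atilde_mem d m), hfx x hq]
        show dist ((e (σ m), cseq (σ m)) : Y × ℝ) ((g x, 0) : Y × ℝ) < ε
        rw [Prod.dist_eq]
        apply max_lt
        · have htri : dist (e (σ m)) (g x) ≤
              dist (e (σ m)) (g (d m)) + dist (g (d m)) (g x) := dist_triangle _ _ _
          have h2 : dist (e (σ m)) (g (d m)) < ε / 2 := by rw [dist_comm]; exact hdist1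
          have h3 : dist (g (d m)) (g x) < ε / 2 := by
            apply hδ₁2
            rw [← hx'm]
            exact hfst
          calc dist (e (σ m)) (g x) ≤ _ := htri
            _ < ε / 2 + ε / 2 := add_lt_add h2 h3
            _ = ε := by ring
        · have : dist (cseq (σ m)) (0:ℝ) = cseq (σ m) := by
            rw [Real.dist_eq, sub_zero, abs_of_nonneg (cseq_pos (σ m)).le]
          rw [this]
          linarith
    · -- isolated point
      have hqeq : (⟨(x, t), hq⟩ : (Itilde d : Set (X × ℝ))) =
          ⟨(d n, cseq n), atilde_mem d n⟩ := Subtype.ext hn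
      rw [hqeq]
      have hnhds : 𝓝 (⟨(d n, cseq n), atilde_mem d n⟩ : (Itilde d : Set (X × ℝ))) = pure _ :=
        le_antisymm (le_pure_iff.2 ((isOpen_atilde_singleton d n).mem_nhds rfl)) (pure_le_nhds _)
      unfold ContinuousAt
      rw [hnhds]
      exact tendsto_pure_nhds _ _
  haveI : CompactSpace (Itilde d : Set (X × ℝ)) := isCompact_iff_compactSpace.1 (isCompact_Itilde d)
  refine ⟨hcont.homeoOfEquivCompactToT2, ?_⟩
  intro x
  exact congrArg Subtype.val (hfx x (Or.inl (Set.mk_mem_prod (Set.mem_univ x) rfl)))
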